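/- The critical points of p₃ restricted to the set {x ∈ ℝ⁵ : p₁(x) = 0, p₂(x) = 1} (i.e., points where ∇p₃(x) ∈ span{∇p₁(x), ∇p₂(x)}) are exactly the coordinate permutations of the points (±1/√20, ±1/√20, ±1/√20, ±1/√20, ∓4/√20) and (±2/√30, ±2/√30, ±2/√30, ∓3/√30, ∓3/√30); in particular there are exactly 30 such critical points. -/

import Mathlib

set_option maxHeartbeats 1000000

noncomputable section

/-- Power sum `p_k(x) = x₁^k + ⋯ + x₅^k` on `ℝ⁵`. -/
def p (k : ℕ) (x : Fin 5 → ℝ) : ℝ := ∑ i, x i ^ k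

/-- The surface `A_C = {x ∈ ℝ⁵ : p₁(x) = 0, p₂(x) = 1, p₃(x) = C}`. -/
def A (C : ℝ) : Set (Fin 5 → ℝ) := {x | p 1 x = 0 ∧ p 2 x = 1 ∧ p 3 x = C}

/-- The gradient of `p_k`: `∇p_k(x) = (k x₁^{k-1}, …, k x₅^{k-1})`. -/
def grad (k : ℕ) (x : Fin 5 → ℝ) : Fin 5 → ℝ := fun i => (k : ℝ) * x i ^ (k - 1)

/-- The set of coordinate permutations of a point `x₀ ∈ ℝ⁵`. -/
def perms (x₀ : Fin 5 → ℝ) : Set (Fin 5 → ℝ) := {x | ∃ σ : Equiv.Perm (Fin 5), x = x₀ ∘ σ}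

open Finset
open scoped Classical

namespace Stmt4

/-- Two-valued vectors: all coordinates in `{r,s}`, exactly `k` of them equal to `r`. -/
def T (r s : ℝ) (k : ℕ) : Set (Fin 5 → ℝ) :=
  {x | (∀ i, x i = r ∨ x i = s) ∧ (univ.filter fun i => x i = r).card = k}

lemma pos_ne_neg {a b : ℝ} (ha : 0 < a) (hb : 0 < b) : a ≠ -b := by intro h; linarith

lemma card_filter_not (P : Fin 5 → Prop) :
    (univ.filter fun i => ¬ P i).card = 5 - (univ.filter P).card := by
  have h := Finset.card_filter_add_card_filter_not (s := (univ : Finset (Fin 5))) P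
  simp only [Finset.card_univ, Fintype.card_fin] at h
  omega

lemma card_filter_second {r s : ℝ} {x : Fin 5 → ℝ} (hv : ∀ i, x i = r ∨ x i = s)
    (hne : r ≠ s) :
    (univ.filter fun i => x i = s).card = 5 - (univ.filter fun i => x i = r).card := by
  rw [← card_filter_not (fun i => x i = r)]
  congr 1
  apply Finset.filter_congr
  intro i _
  rcases hv i with h | h <;> simp [h, hne, hne.symm, Ne.symm hne]

lemma p_T {r s : ℝ} {x : Fin 5 → ℝ} (hv : ∀ i, x i = r ∨ x i = s) (n : ℕ) :
    p n x = ((univ.filter fun i => x i = r).card : ℝ) * r ^ n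
      + (5 - ((univ.filter fun i => x i = r).card : ℝ)) * s ^ n := by
  have hle : (univ.filter fun i => x i = r).card ≤ 5 := by
    simpa using Finset.card_filter_le (univ : Finset (Fin 5)) (fun i => x i = r)
  have hnot : ((univ.filter fun i => ¬ x i = r).card : ℝ)
      = 5 - ((univ.filter fun i => x i = r).card : ℝ) := by
    have h := Finset.card_filter_add_card_filter_not
      (s := (univ : Finset (Fin 5))) (fun i => x i = r)
    simp only [Finset.card_univ, Fintype.card_fin] at h
    push_cast
    have : (univ.filter fun i => ¬ x i = r).card = 5 - (univ.filter fun i => x i = r).card := by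
      omega
    rw [this]; push_cast [Nat.cast_sub hle]; ring
  rw [p, ← Finset.sum_filter_add_sum_filter_not univ (fun i => x i = r)]
  have e1 : ∑ i ∈ univ.filter (fun i => x i = r), x i ^ n
      = ∑ _i ∈ univ.filter (fun i => x i = r), r ^ n :=
    Finset.sum_congr rfl fun i hi => by rw [(Finset.mem_filter.mp hi).2]
  have e2 : ∑ i ∈ univ.filter (fun i => ¬ x i = r), x i ^ n
      = ∑ _i ∈ univ.filter (fun i => ¬ x i = r), s ^ n :=
    Finset.sum_congr rfl fun i hi => by
      rcases hv i with h | h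
      · exact absurd h (Finset.mem_filter.mp hi).2
      · rw [h]
  rw [e1, e2, Finset.sum_const, Finset.sum_const, nsmul_eq_mul, nsmul_eq_mul, hnot]

lemma span_of_two_valued {r s : ℝ} {x : Fin 5 → ℝ} (hv : ∀ i, x i = r ∨ x i = s) :
    grad 3 x ∈ Submodule.span ℝ ({grad 1 x, grad 2 x} : Set (Fin 5 → ℝ)) := by
  rw [Submodule.mem_span_pair]
  refine ⟨-3 * (r * s), 3 / 2 * (r + s), ?_⟩
  funext i
  simp only [Pi.add_apply, Pi.smul_apply, smul_eq_mul, grad]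
  rcases hv i with h | h <;> rw [h] <;> push_cast <;> ring

lemma mem_span_iff (x : Fin 5 → ℝ) :
    grad 3 x ∈ Submodule.span ℝ ({grad 1 x, grad 2 x} : Set (Fin 5 → ℝ)) ↔
      ∃ a b : ℝ, ∀ i, 3 * x i ^ 2 = a + b * (2 * x i) := by
  rw [Submodule.mem_span_pair]
  constructor
  · rintro ⟨a, b, hab⟩
    refine ⟨a, b, fun i => ?_⟩
    have := congrFun hab i
    simp only [Pi.add_apply, Pi.smul_apply, smul_eq_mul, grad] at this
    push_cast at this
    simpa using this.symm.trans (by ring)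
  · rintro ⟨a, b, h⟩
    refine ⟨a, b, funext fun i => ?_⟩
    simp only [Pi.add_apply, Pi.smul_apply, smul_eq_mul, grad]
    push_cast
    have := h i
    simp
    linarith

lemma perms_eq_T {r s : ℝ} {k : ℕ} {x₀ : Fin 5 → ℝ}
    (hv₀ : ∀ i, x₀ i = r ∨ x₀ i = s)
    (hk₀ : (univ.filter fun i => x₀ i = r).card = k) :
    perms x₀ = T r s k := by
  ext x
  constructor
  · rintro ⟨σ, rfl⟩
    refine ⟨fun i => hv₀ (σ i), ?_⟩
    rw [← hk₀]
    exact Finset.card_equiv σ (fun i => by simp)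
  · rintro ⟨hv, hk⟩
    set P := fun i => x i = r with hP
    set Q := fun i => x₀ i = r with hQ
    have hcard1 : Fintype.card {i // P i} = Fintype.card {i // Q i} := by
      rw [Fintype.card_subtype, Fintype.card_subtype, hk, hk₀]
    have hcard2 : Fintype.card {i // ¬ P i} = Fintype.card {i // ¬ Q i} := by
      rw [Fintype.card_subtype_compl, Fintype.card_subtype_compl, hcard1]
    let e1 : {i // P i} ≃ {i // Q i} := Fintype.equivOfCardEq hcard1
    let e2 : {i // ¬ P i} ≃ {i // ¬ Q i} := Fintype.equivOfCardEq hcard2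
    let σ : Equiv.Perm (Fin 5) :=
      (Equiv.sumCompl P).symm.trans ((e1.sumCongr e2).trans (Equiv.sumCompl Q))
    refine ⟨σ, funext fun i => ?_⟩
    by_cases h : P i
    · have hσ : σ i = (e1 ⟨i, h⟩ : Fin 5) := by
        simp only [σ, Equiv.trans_apply, Equiv.sumCompl_symm_apply_of_pos h,
          Equiv.sumCongr_apply, Sum.map_inl, Equiv.sumCompl_apply_inl]
      have : Q ((e1 ⟨i, h⟩ : Fin 5)) := (e1 ⟨i, h⟩).2
      simp only [Function.comp_apply, hσ]
      rw [this, h]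
    · have hσ : σ i = (e2 ⟨i, h⟩ : Fin 5) := by
        simp only [σ, Equiv.trans_apply, Equiv.sumCompl_symm_apply_of_neg h,
          Equiv.sumCongr_apply, Sum.map_inr, Equiv.sumCompl_apply_inr]
      have hq : ¬ Q ((e2 ⟨i, h⟩ : Fin 5)) := (e2 ⟨i, h⟩).2
      have hx : x i = s := (hv i).resolve_left h
      have hx0 : x₀ ((e2 ⟨i, h⟩ : Fin 5)) = s := (hv₀ _).resolve_left hq
      simp only [Function.comp_apply, hσ]
      rw [hx, hx0]

lemma finite_T (r s : ℝ) (k : ℕ) : (T r s k).Finite := by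
  apply Set.Finite.subset (Set.Finite.pi (fun _ : Fin 5 => (Set.finite_singleton s).insert r))
  intro x hx
  intro i _
  rcases hx.1 i with h | h <;> simp [h]

lemma disj_T {r s r' s' : ℝ} {k k' : ℕ} (h1 : r ≠ r') (h2 : r ≠ s') (hk : 1 ≤ k) :
    Disjoint (T r s k) (T r' s' k') := by
  rw [Set.disjoint_left]
  rintro x ⟨hv, hc⟩ ⟨hv', _⟩
  have : 0 < (univ.filter fun i => x i = r).card := by omega
  obtain ⟨i, hi⟩ := Finset.card_pos.mp this
  have hir : x i = r := (Finset.mem_filter.mp hi).2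
  rcases hv' i with h | h
  · exact h1 (hir ▸ h)
  · exact h2 (hir ▸ h)

lemma ncard_T (r s : ℝ) (k : ℕ) (hrs : r ≠ s) : (T r s k).ncard = Nat.choose 5 k := by
  have e : T r s k ≃ {S : Finset (Fin 5) // S.card = k} := by
    refine ⟨fun x => ⟨univ.filter fun i => x.1 i = r, x.2.2⟩,
      fun S => ⟨fun i => if i ∈ S.1 then r else s, fun i => by dsimp; split <;> simp, ?_⟩,
      ?_, ?_⟩
    · have : (univ.filter fun i => (if i ∈ S.1 then r else s) = r) = S.1 := by
        ext i
        simp only [Finset.mem_filter, Finset.mem_univ, true_and]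
        split <;> simp_all [hrs.symm]
      rw [this, S.2]
    · rintro ⟨x, hv, hk⟩
      ext i
      simp only [Finset.mem_filter, Finset.mem_univ, true_and]
      by_cases h : x i = r
      · simp [h]
      · simp [h, ((hv i).resolve_left h).symm]
    · rintro ⟨S, hS⟩
      ext i
      simp only [Finset.mem_filter, Finset.mem_univ, true_and]
      split <;> simp_all [hrs.symm]
  rw [← Nat.card_coe_set_eq]
  rw [Nat.card_congr e, Nat.card_eq_fintype_card, Fintype.card_finset_len, Fintype.card_fin]

lemma vals4 (r s : ℝ) : ∀ i, (![r,r,r,r,s]) i = r ∨ (![r,r,r,r,s]) i = s := by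
  intro i; fin_cases i <;> simp

lemma vals3 (r s : ℝ) : ∀ i, (![r,r,r,s,s]) i = r ∨ (![r,r,r,s,s]) i = s := by
  intro i; fin_cases i <;> simp

lemma count4 {r s : ℝ} (h : s ≠ r) :
    (univ.filter fun i => (![r,r,r,r,s]) i = r).card = 4 := by
  have : (univ.filter fun i => (![r,r,r,r,s]) i = r) = {0, 1, 2, 3} := by
    ext i; fin_cases i <;> simp [h]
  rw [this]; rfl

lemma count3 {r s : ℝ} (h : s ≠ r) :
    (univ.filter fun i => (![r,r,r,s,s]) i = r).card = 3 := by
  have : (univ.filter fun i => (![r,r,r,s,s]) i = r) = {0, 1, 2} := by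
    ext i; fin_cases i <;> simp [h]
  rw [this]; rfl

section nes
variable {r : ℝ}

lemma c1 : (1:ℝ) / Real.sqrt 20 ≠ 2 / Real.sqrt 30 := by
  have hs20 : Real.sqrt 20 ^ 2 = 20 := Real.sq_sqrt (by norm_num)
  have hs30 : Real.sqrt 30 ^ 2 = 30 := Real.sq_sqrt (by norm_num)
  have hs20p : 0 < Real.sqrt 20 := Real.sqrt_pos.mpr (by norm_num)
  have hs30p : 0 < Real.sqrt 30 := Real.sqrt_pos.mpr (by norm_num)
  intro h
  rw [div_eq_div_iff (by positivity) (by positivity)] at h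
  nlinarith [h]

lemma c2 : (1:ℝ) / Real.sqrt 20 ≠ 3 / Real.sqrt 30 := by
  have hs20 : Real.sqrt 20 ^ 2 = 20 := Real.sq_sqrt (by norm_num)
  have hs30 : Real.sqrt 30 ^ 2 = 30 := Real.sq_sqrt (by norm_num)
  have hs20p : 0 < Real.sqrt 20 := Real.sqrt_pos.mpr (by norm_num)
  have hs30p : 0 < Real.sqrt 30 := Real.sqrt_pos.mpr (by norm_num)
  intro h
  rw [div_eq_div_iff (by positivity) (by positivity)] at h
  nlinarith [h]
end nes

lemma main_eq :
    {x : Fin 5 → ℝ | p 1 x = 0 ∧ p 2 x = 1 ∧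
        grad 3 x ∈ Submodule.span ℝ ({grad 1 x, grad 2 x} : Set (Fin 5 → ℝ))} =
      T (1 / Real.sqrt 20) (-(4 / Real.sqrt 20)) 4 ∪
      T (-(1 / Real.sqrt 20)) (4 / Real.sqrt 20) 4 ∪
      T (2 / Real.sqrt 30) (-(3 / Real.sqrt 30)) 3 ∪
      T (-(2 / Real.sqrt 30)) (3 / Real.sqrt 30) 3 := by
  have hs20 : Real.sqrt 20 ^ 2 = 20 := Real.sq_sqrt (by norm_num)
  have hs30 : Real.sqrt 30 ^ 2 = 30 := Real.sq_sqrt (by norm_num)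
  have hs20p : 0 < Real.sqrt 20 := Real.sqrt_pos.mpr (by norm_num)
  have hs30p : 0 < Real.sqrt 30 := Real.sqrt_pos.mpr (by norm_num)
  ext x
  simp only [Set.mem_setOf_eq, Set.mem_union]
  constructor
  · rintro ⟨h1, h2, hspan⟩
    obtain ⟨a, b, h⟩ := (mem_span_iff x).mp hspan
    -- a = 3/5
    have hsum : ∑ i, (3 * x i ^ 2) = ∑ i : Fin 5, (a + b * (2 * x i)) :=
      Finset.sum_congr rfl fun i _ => h i
    have l1 : ∑ i, (3 * x i ^ 2) = 3 * p 2 x := by rw [p, Finset.mul_sum]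
    have l2 : ∑ i : Fin 5, (a + b * (2 * x i)) = 5 * a + 2 * b * p 1 x := by
      rw [Finset.sum_add_distrib, Finset.sum_const, Finset.card_univ, Fintype.card_fin, p]
      have : ∑ i : Fin 5, b * (2 * x i) = 2 * b * ∑ i, x i := by
        rw [Finset.mul_sum]; exact Finset.sum_congr rfl fun i _ => by ring
      rw [this]
      simp only [pow_one]
      push_cast; ring
    have ha : a = 3 / 5 := by rw [l1, l2, h1, h2] at hsum; linarith
    obtain ⟨m, hm⟩ : ∃ y : ℝ, y = 2 * b / 3 := ⟨_, rfl⟩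
    have hdisc : (0:ℝ) < m ^ 2 + 4 / 5 := by positivity
    have hd2' : Real.sqrt (m ^ 2 + 4 / 5) ^ 2 = m ^ 2 + 4 / 5 := Real.sq_sqrt hdisc.le
    have hd0' : 0 < Real.sqrt (m ^ 2 + 4 / 5) := Real.sqrt_pos.mpr hdisc
    obtain ⟨d, hdd⟩ : ∃ y : ℝ, y = Real.sqrt (m ^ 2 + 4 / 5) := ⟨_, rfl⟩
    rw [← hdd] at hd2' hd0'
    have hd2 : d ^ 2 = m ^ 2 + 4 / 5 := hd2'
    have hd0 : 0 < d := hd0'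
    obtain ⟨u, hu⟩ : ∃ y : ℝ, y = (m + d) / 2 := ⟨_, rfl⟩
    obtain ⟨v, hv⟩ : ∃ y : ℝ, y = (m - d) / 2 := ⟨_, rfl⟩
    have huv : u * v = -(1 / 5) := by rw [hu, hv]; linear_combination (-(1:ℝ)/4) * hd2
    have hroot : ∀ i, x i = u ∨ x i = v := by
      intro i
      have hi := h i
      rw [ha] at hi
      have hz : (x i - u) * (x i - v) = 0 := by
        rw [hu, hv, hm]; linear_combination hi / 3 - (1/4 : ℝ) * hd2 - ((m + 2*b/3)/4) * hm
      rcases mul_eq_zero.mp hz with hz | hz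
      · left; linarith [sub_eq_zero.mp hz]
      · right; linarith [sub_eq_zero.mp hz]
    have hlt : v < u := by
      have : u - v = d := by rw [hu, hv]; ring
      linarith
    have hune : u ≠ v := ne_of_gt hlt
    have hu0 : 0 < u := by nlinarith
    have hv0 : v < 0 := by nlinarith
    obtain ⟨k, hk⟩ : ∃ k, (univ.filter fun i => x i = u).card = k := ⟨_, rfl⟩
    have hk5 : k ≤ 5 := by
      rw [← hk]; simpa using Finset.card_filter_le (univ : Finset (Fin 5)) _
    have e1 : (k : ℝ) * u + (5 - k) * v = 0 := by
      have := p_T hroot 1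
      rw [h1, hk] at this
      simp only [pow_one] at this
      linarith
    have e2 : (k : ℝ) * u ^ 2 + (5 - k) * v ^ 2 = 1 := by
      have := p_T hroot 2
      rw [h2, hk] at this
      linarith
    clear hsum l1 l2 h hspan ha hdd hd2' hd0' hd2 hd0 hm hdisc hu hv h1 h2
    interval_cases k <;> norm_num at e1 e2
    · -- k = 0 : 5 v = 0
      exfalso; nlinarith
    · -- k = 1
      have hueq : u = -(4 * v) := by linarith
      have hv2 : v ^ 2 = 1 / 20 := by nlinarith
      have key : (v * Real.sqrt 20 - 1) * (v * Real.sqrt 20 + 1) = 0 := by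
        linear_combination Real.sqrt 20 ^ 2 * hv2 + (1/20 : ℝ) * hs20
      have hvv : v = -(1 / Real.sqrt 20) := by
        rcases mul_eq_zero.mp key with hks | hks
        · nlinarith
        · field_simp; linarith
      have huu : u = 4 / Real.sqrt 20 := by rw [hueq, hvv]; ring
      refine Or.inl (Or.inl (Or.inr ⟨fun i => ?_, ?_⟩))
      · rw [← huu, ← hvv]; exact (hroot i).symm
      · rw [← hvv, card_filter_second hroot hune, hk]
    · -- k = 2
      have hueq : u = -(3 / 2 * v) := by linarith
      have hv2 : v ^ 2 = 2 / 15 := by nlinarith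
      have key : (v * Real.sqrt 30 - 2) * (v * Real.sqrt 30 + 2) = 0 := by
        linear_combination Real.sqrt 30 ^ 2 * hv2 + (2/15 : ℝ) * hs30
      have hvv : v = -(2 / Real.sqrt 30) := by
        rcases mul_eq_zero.mp key with hks | hks
        · nlinarith
        · field_simp; linarith
      have huu : u = 3 / Real.sqrt 30 := by rw [hueq, hvv]; ring
      refine Or.inr ⟨fun i => ?_, ?_⟩
      · rw [← huu, ← hvv]; exact (hroot i).symm
      · rw [← hvv, card_filter_second hroot hune, hk]
    · -- k = 3
      have hveq : v = -(3 / 2 * u) := by linarith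
      have hu2 : u ^ 2 = 2 / 15 := by nlinarith
      have key : (u * Real.sqrt 30 - 2) * (u * Real.sqrt 30 + 2) = 0 := by
        linear_combination Real.sqrt 30 ^ 2 * hu2 + (2/15 : ℝ) * hs30
      have huu : u = 2 / Real.sqrt 30 := by
        rcases mul_eq_zero.mp key with hks | hks
        · field_simp; linarith
        · nlinarith
      have hvv : v = -(3 / Real.sqrt 30) := by rw [hveq, huu]; ring
      refine Or.inl (Or.inr ⟨fun i => ?_, ?_⟩)
      · rw [← huu, ← hvv]; exact hroot i
      · rw [← huu, hk]
    · -- k = 4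
      have hveq : v = -(4 * u) := by linarith
      have hu2 : u ^ 2 = 1 / 20 := by nlinarith
      have key : (u * Real.sqrt 20 - 1) * (u * Real.sqrt 20 + 1) = 0 := by
        linear_combination Real.sqrt 20 ^ 2 * hu2 + (1/20 : ℝ) * hs20
      have huu : u = 1 / Real.sqrt 20 := by
        rcases mul_eq_zero.mp key with hks | hks
        · field_simp; linarith
        · nlinarith
      have hvv : v = -(4 / Real.sqrt 20) := by rw [hveq, huu]; ring
      refine Or.inl (Or.inl (Or.inl ⟨fun i => ?_, ?_⟩))
      · rw [← huu, ← hvv]; exact hroot i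
      · rw [← huu, hk]
    · -- k = 5 : 5 u = 0
      exfalso; nlinarith
  · rintro (((⟨hv, hk⟩ | ⟨hv, hk⟩) | ⟨hv, hk⟩) | ⟨hv, hk⟩) <;>
      refine ⟨?_, ?_, span_of_two_valued hv⟩ <;>
      rw [p_T hv _, hk] <;> push_cast
    · ring
    · have h20 : Real.sqrt 20 ≠ 0 := ne_of_gt hs20p
      field_simp
      linarith
    · ring
    · have h20 : Real.sqrt 20 ≠ 0 := ne_of_gt hs20p
      field_simp
      linarith
    · ring
    · have h30 : Real.sqrt 30 ≠ 0 := ne_of_gt hs30p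
      field_simp
      linarith
    · ring
    · have h30 : Real.sqrt 30 ≠ 0 := ne_of_gt hs30p
      field_simp
      linarith

lemma finite_all :
    (T (1 / Real.sqrt 20) (-(4 / Real.sqrt 20)) 4 ∪
      T (-(1 / Real.sqrt 20)) (4 / Real.sqrt 20) 4 ∪
      T (2 / Real.sqrt 30) (-(3 / Real.sqrt 30)) 3).Finite :=
  ((finite_T _ _ _).union (finite_T _ _ _)).union (finite_T _ _ _)

end Stmt4

open Stmt4

/-- the critical points of `p₃` on `{p₁ = 0, p₂ = 1}` are exactly the coordinate
permutations of `(±1/√20, ±1/√20, ±1/√20, ±1/√20, ∓4/√20)` and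
`(±2/√30, ±2/√30, ±2/√30, ∓3/√30, ∓3/√30)`; there are exactly 30 of them. -/
theorem stmt_4 :
    ({x : Fin 5 → ℝ | p 1 x = 0 ∧ p 2 x = 1 ∧
        grad 3 x ∈ Submodule.span ℝ ({grad 1 x, grad 2 x} : Set (Fin 5 → ℝ))} =
      perms ![1 / Real.sqrt 20, 1 / Real.sqrt 20, 1 / Real.sqrt 20, 1 / Real.sqrt 20,
          -(4 / Real.sqrt 20)] ∪
      perms ![-(1 / Real.sqrt 20), -(1 / Real.sqrt 20), -(1 / Real.sqrt 20), -(1 / Real.sqrt 20),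
          4 / Real.sqrt 20] ∪
      perms ![2 / Real.sqrt 30, 2 / Real.sqrt 30, 2 / Real.sqrt 30, -(3 / Real.sqrt 30),
          -(3 / Real.sqrt 30)] ∪
      perms ![-(2 / Real.sqrt 30), -(2 / Real.sqrt 30), -(2 / Real.sqrt 30), 3 / Real.sqrt 30,
          3 / Real.sqrt 30]) ∧
    {x : Fin 5 → ℝ | p 1 x = 0 ∧ p 2 x = 1 ∧
        grad 3 x ∈ Submodule.span ℝ ({grad 1 x, grad 2 x} : Set (Fin 5 → ℝ))}.ncard = 30 := by
  have hs20 : Real.sqrt 20 ^ 2 = 20 := Real.sq_sqrt (by norm_num)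
  have hs30 : Real.sqrt 30 ^ 2 = 30 := Real.sq_sqrt (by norm_num)
  have hs20p : 0 < Real.sqrt 20 := Real.sqrt_pos.mpr (by norm_num)
  have hs30p : 0 < Real.sqrt 30 := Real.sqrt_pos.mpr (by norm_num)
  -- inequalities between the relevant values
  have ne1 : -(4 / Real.sqrt 20) ≠ 1 / Real.sqrt 20 :=
    (pos_ne_neg (by positivity) (by positivity)).symm
  have ne2 : 4 / Real.sqrt 20 ≠ -(1 / Real.sqrt 20) := pos_ne_neg (by positivity) (by positivity)
  have ne3 : -(3 / Real.sqrt 30) ≠ 2 / Real.sqrt 30 :=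
    (pos_ne_neg (by positivity) (by positivity)).symm
  have ne4 : 3 / Real.sqrt 30 ≠ -(2 / Real.sqrt 30) := pos_ne_neg (by positivity) (by positivity)
  have hsame20 : (1:ℝ) / Real.sqrt 20 ≠ 4 / Real.sqrt 20 := by
    intro h
    rw [div_eq_div_iff (ne_of_gt hs20p) (ne_of_gt hs20p)] at h
    nlinarith
  have hsame30 : (2:ℝ) / Real.sqrt 30 ≠ 3 / Real.sqrt 30 := by
    intro h
    rw [div_eq_div_iff (ne_of_gt hs30p) (ne_of_gt hs30p)] at h
    nlinarith
  -- pairwise disjointness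
  have d12 : Disjoint (T (1 / Real.sqrt 20) (-(4 / Real.sqrt 20)) 4)
      (T (-(1 / Real.sqrt 20)) (4 / Real.sqrt 20) 4) :=
    disj_T (pos_ne_neg (by positivity) (by positivity)) hsame20 (by norm_num)
  have d13 : Disjoint (T (1 / Real.sqrt 20) (-(4 / Real.sqrt 20)) 4)
      (T (2 / Real.sqrt 30) (-(3 / Real.sqrt 30)) 3) :=
    disj_T c1 (pos_ne_neg (by positivity) (by positivity)) (by norm_num)
  have d14 : Disjoint (T (1 / Real.sqrt 20) (-(4 / Real.sqrt 20)) 4)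
      (T (-(2 / Real.sqrt 30)) (3 / Real.sqrt 30) 3) :=
    disj_T (pos_ne_neg (by positivity) (by positivity)) c2 (by norm_num)
  have d23 : Disjoint (T (-(1 / Real.sqrt 20)) (4 / Real.sqrt 20) 4)
      (T (2 / Real.sqrt 30) (-(3 / Real.sqrt 30)) 3) :=
    disj_T (Ne.symm (pos_ne_neg (by positivity) (by positivity)))
      (fun h => c2 (neg_injective h)) (by norm_num)
  have d24 : Disjoint (T (-(1 / Real.sqrt 20)) (4 / Real.sqrt 20) 4)
      (T (-(2 / Real.sqrt 30)) (3 / Real.sqrt 30) 3) :=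
    disj_T (fun h => c1 (neg_injective h))
      (Ne.symm (pos_ne_neg (by positivity) (by positivity))) (by norm_num)
  have d34 : Disjoint (T (2 / Real.sqrt 30) (-(3 / Real.sqrt 30)) 3)
      (T (-(2 / Real.sqrt 30)) (3 / Real.sqrt 30) 3) :=
    disj_T (pos_ne_neg (by positivity) (by positivity)) hsame30 (by norm_num)
  constructor
  · rw [main_eq, perms_eq_T (vals4 _ _) (count4 ne1), perms_eq_T (vals4 _ _) (count4 ne2),
      perms_eq_T (vals3 _ _) (count3 ne3), perms_eq_T (vals3 _ _) (count3 ne4)]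
  · rw [main_eq,
      Set.ncard_union_eq ((d14.union_left d24).union_left d34) finite_all (finite_T _ _ _),
      Set.ncard_union_eq (d13.union_left d23) ((finite_T _ _ _).union (finite_T _ _ _))
        (finite_T _ _ _),
      Set.ncard_union_eq d12 (finite_T _ _ _) (finite_T _ _ _),
      ncard_T _ _ _ ne1.symm, ncard_T _ _ _ ne2.symm, ncard_T _ _ _ ne3.symm,
      ncard_T _ _ _ ne4.symm]
    decide
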